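/- Let G be a finite simple graph and q ≥ 2 an integer, and let G^∘ denote G with a loop added at every vertex. Then the map ι sending each φ : V(G) → {1,…,c} to the map φ* : V(G) × {1,…,q} → {1,…,c} defined by φ*(g,i) = φ(g) is a graph embedding of the exponential graph E_c(G^∘) into E_c(G ⊠ K_q): it is injective, and φ₁, φ₂ are co-proper in E_c(G^∘) if and only if φ₁*, φ₂* are co-proper in E_c(G ⊠ K_q). -/

import Mathlib

/-- Two maps `φ₁ φ₂ : V → C` are co-proper relative to an adjacency relation `Adj` on `V`
if `φ₁ u ≠ φ₂ v` whenever `u` is adjacent to `v`. Co-proper pairs of maps `V → Fin c` are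
exactly the adjacent pairs of vertices in the exponential graph `E_c(H)`. -/
def CoProper {V C : Type*} (Adj : V → V → Prop) (φ₁ φ₂ : V → C) : Prop :=
  ∀ u v, Adj u v → φ₁ u ≠ φ₂ v

/-- The strong product `G ⊠ H` of two simple graphs. -/
def SimpleGraph.strongProd {α β : Type*} (G : SimpleGraph α) (H : SimpleGraph β) :
    SimpleGraph (α × β) where
  Adj p q := (G.Adj p.1 q.1 ∧ H.Adj p.2 q.2) ∨ (G.Adj p.1 q.1 ∧ p.2 = q.2) ∨
    (p.1 = q.1 ∧ H.Adj p.2 q.2)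
  symm := by
    refine ⟨?_⟩
    rintro p q (⟨h1, h2⟩ | ⟨h1, h2⟩ | ⟨h1, h2⟩)
    · exact Or.inl ⟨h1.symm, h2.symm⟩
    · exact Or.inr (Or.inl ⟨h1.symm, h2.symm⟩)
    · exact Or.inr (Or.inr ⟨h1.symm, h2.symm⟩)
  loopless := by
    refine ⟨?_⟩
    rintro p (⟨h1, _⟩ | ⟨h1, _⟩ | ⟨_, h2⟩)
    · exact G.irrefl h1
    · exact G.irrefl h1
    · exact H.irrefl h2

/-- The map `ι` sending `φ : V(G) → {1,…,c}` to the map `φ* : V(G) × V(K_q) → {1,…,c}`,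
`φ*(g,i) = φ(g)`, is an embedding of `E_c(G°)` into `E_c(G ⊠ K_q)`, where `G°` is `G`
with loops added at every vertex: `ι` is injective, and `φ₁, φ₂` are co-proper in
`E_c(G°)` iff `φ₁*, φ₂*` are co-proper in `E_c(G ⊠ K_q)`. -/
theorem exp_graph_embedding {V : Type*} [Fintype V] (G : SimpleGraph V)
    (q c : ℕ) (hq : 2 ≤ q) (hc : 1 ≤ c) :
    Function.Injective
      (fun (φ : V → Fin c) => (fun p : V × Fin q => φ p.1)) ∧
    ∀ φ₁ φ₂ : V → Fin c,
      (CoProper (fun a b : V => a = b ∨ G.Adj a b) φ₁ φ₂ ↔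
        CoProper (G.strongProd (⊤ : SimpleGraph (Fin q))).Adj
          (fun p : V × Fin q => φ₁ p.1) (fun p : V × Fin q => φ₂ p.1)) := by
  have h0 : (0 : ℕ) < q := by omega
  have h1 : (1 : ℕ) < q := by omega
  constructor
  · intro φ ψ h
    funext v
    exact congrFun h (v, ⟨0, h0⟩)
  · intro φ₁ φ₂
    constructor
    · rintro h ⟨u, i⟩ ⟨v, j⟩ (⟨ha, _⟩ | ⟨ha, _⟩ | ⟨he, _⟩)
      · exact h u v (Or.inr ha)
      · exact h u v (Or.inr ha)
      · exact h u v (Or.inl he)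
    · rintro h u v (rfl | ha)
      · exact h (u, ⟨0, h0⟩) (u, ⟨1, h1⟩)
          (Or.inr (Or.inr ⟨rfl, by simp [SimpleGraph.top_adj, Fin.ext_iff]⟩))
      · exact h (u, ⟨0, h0⟩) (v, ⟨0, h0⟩) (Or.inr (Or.inl ⟨ha, rfl⟩))
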